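/- Let F be a sparseness measure with cost function J on ℝⁿ, let A be an m×n real matrix, let k ≥ 1, and let σ > 0 be such that ‖A u‖ ≥ σ‖u‖ for every u in the orthogonal complement of ker A. Suppose that for some d > 0 the robust null space condition with parameter d holds for (A, k, J). Then A satisfies RRC at sparsity k for J with constant C = 2(1+d)/(d σ). -/

import Mathlib

noncomputable section

/-- `F : ℝ → ℝ` is a sparseness measure: nonnegative on `[0,∞)`,
vanishing exactly at `0`, and `F (|·|)` is subadditive on `ℝ`. -/
def SparsenessMeasure (F : ℝ → ℝ) : Prop :=
  (∀ t : ℝ, 0 ≤ t → 0 ≤ F t) ∧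
  (∀ t : ℝ, 0 ≤ t → (F t = 0 ↔ t = 0)) ∧
  (∀ x y : ℝ, F |x + y| ≤ F |x| + F |y|)

/-- The cost function `J(x) = ∑ i, F |x i|` on `ℝⁿ`. -/
def costJ {n : ℕ} (F : ℝ → ℝ) (x : EuclideanSpace ℝ (Fin n)) : ℝ :=
  ∑ i, F |x i|

/-- The restricted cost `J(x_T) = ∑ i ∈ T, F |x i|`. -/
def costJT {n : ℕ} (F : ℝ → ℝ) (T : Finset (Fin n)) (x : EuclideanSpace ℝ (Fin n)) : ℝ :=
  ∑ i ∈ T, F |x i|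

/-- `x` has at most `k` nonzero entries. -/
def Sparse {n : ℕ} (k : ℕ) (x : EuclideanSpace ℝ (Fin n)) : Prop :=
  ∃ T : Finset (Fin n), T.card ≤ k ∧ ∀ i ∉ T, x i = 0

/-- The matrix `A` acting as a continuous linear map between Euclidean spaces. -/
def mulVecCLM {m n : ℕ} (A : Matrix (Fin m) (Fin n) ℝ) :
    EuclideanSpace ℝ (Fin n) →L[ℝ] EuclideanSpace ℝ (Fin m) :=
  (((EuclideanSpace.equiv (Fin m) ℝ).symm : (Fin m → ℝ) →L[ℝ] EuclideanSpace ℝ (Fin m)).comp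
    (Matrix.mulVecLin A).toContinuousLinearMap).comp
    ((EuclideanSpace.equiv (Fin n) ℝ) : EuclideanSpace ℝ (Fin n) →L[ℝ] (Fin n → ℝ))

/-- `A` satisfies the robust recovery condition at sparsity `k` for the cost `J_F`
with constant `C`: for every `k`-sparse `x̄`, every `ε > 0`, every noise `v` with
`‖v‖ ≤ ε`, and every feasible `x̂` with `J(x̂) ≤ J(x̄)`, one has `‖x̄ - x̂‖ ≤ C ε`. -/
def RRC {m n : ℕ} (A : Matrix (Fin m) (Fin n) ℝ) (k : ℕ) (F : ℝ → ℝ) (C : ℝ) : Prop :=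
  ∀ xbar : EuclideanSpace ℝ (Fin n), Sparse k xbar →
    ∀ ε : ℝ, 0 < ε →
      ∀ v : EuclideanSpace ℝ (Fin m), ‖v‖ ≤ ε →
        ∀ xhat : EuclideanSpace ℝ (Fin n),
          ‖mulVecCLM A xhat - (mulVecCLM A xbar + v)‖ ≤ ε →
            costJ F xhat ≤ costJ F xbar → ‖xbar - xhat‖ ≤ C * ε

/-- The robust null space condition with parameter `d` for `(A, k, J_F)`. -/
def RNSP {m n : ℕ} (A : Matrix (Fin m) (Fin n) ℝ) (k : ℕ) (F : ℝ → ℝ) (d : ℝ) : Prop :=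
  ∀ z ∈ LinearMap.ker (mulVecCLM A : EuclideanSpace ℝ (Fin n) →ₗ[ℝ] EuclideanSpace ℝ (Fin m)), z ≠ 0 →
    ∀ η : EuclideanSpace ℝ (Fin n), ‖η‖ < d * ‖z‖ →
      ∀ T : Finset (Fin n), T.card ≤ k →
        costJT F T (z + η) < costJT F Tᶜ (z + η)

/-- direct part of Theorem 1: if the robust null space condition with
parameter `d > 0` holds for `(A, k, J)`, and `σ > 0` satisfies `‖A u‖ ≥ σ ‖u‖` for all
`u ⟂ ker A`, then `A` satisfies RRC at sparsity `k` for `J` with `C = 2(1+d)/(dσ)`. -/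
theorem stmt0 {m n : ℕ} (F : ℝ → ℝ) (hF : SparsenessMeasure F)
    (A : Matrix (Fin m) (Fin n) ℝ) (k : ℕ) (hk : 1 ≤ k)
    (σ : ℝ) (hσ : 0 < σ)
    (hσA : ∀ u ∈ (LinearMap.ker (mulVecCLM A : EuclideanSpace ℝ (Fin n) →ₗ[ℝ] EuclideanSpace ℝ (Fin m)))ᗮ, σ * ‖u‖ ≤ ‖mulVecCLM A u‖)
    (d : ℝ) (hd : 0 < d) (hrnsp : RNSP A k F d) :
    RRC A k F (2 * (1 + d) / (d * σ)) := by

  obtain ⟨hF0, hFz, hFsub⟩ := hF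
  have hF00 : F 0 = 0 := (hFz 0 le_rfl).mpr rfl
  rintro xbar ⟨T, hTcard, hTsupp⟩ ε hε v hv xhat hfeas hcost
  set K := LinearMap.ker (mulVecCLM A : EuclideanSpace ℝ (Fin n) →ₗ[ℝ] EuclideanSpace ℝ (Fin m)) with hK
  set h : EuclideanSpace ℝ (Fin n) := xbar - xhat with hh
  set z : EuclideanSpace ℝ (Fin n) := (K.orthogonalProjectionOnto h : EuclideanSpace ℝ (Fin n)) with hz
  set w : EuclideanSpace ℝ (Fin n) := h - z with hw
  have hzK : z ∈ K := (K.orthogonalProjectionOnto h).2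
  have hwK : w ∈ Kᗮ := Submodule.sub_starProjection_mem_orthogonal (K := K) h
  have hzw : z + w = h := by simp [hw]
  have hAz : mulVecCLM A z = 0 := hzK
  have hAhw : mulVecCLM A h = mulVecCLM A w := by
    conv_lhs => rw [← hzw]
    rw [map_add, hAz, zero_add]
  have hAh2 : ‖mulVecCLM A h‖ ≤ 2 * ε := by
    have heq : mulVecCLM A h = -(mulVecCLM A xhat - (mulVecCLM A xbar + v)) - v := by
      rw [hh, map_sub]; abel
    rw [heq]
    calc ‖-(mulVecCLM A xhat - (mulVecCLM A xbar + v)) - v‖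
        ≤ ‖-(mulVecCLM A xhat - (mulVecCLM A xbar + v))‖ + ‖v‖ := norm_sub_le _ _
      _ ≤ ε + ε := by rw [norm_neg]; exact add_le_add hfeas hv
      _ = 2 * ε := by ring
  have hwnorm : σ * ‖w‖ ≤ 2 * ε := le_trans (hσA w hwK) (hAhw ▸ hAh2)
  -- the cost comparison
  have hcostsplit : ∀ x : EuclideanSpace ℝ (Fin n), costJ F x = costJT F T x + costJT F Tᶜ x := by
    intro x
    rw [costJ, costJT, costJT, Finset.sum_add_sum_compl]
  have hxbarc : costJT F Tᶜ xbar = 0 := by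
    apply Finset.sum_eq_zero
    intro i hi
    rw [hTsupp i (Finset.mem_compl.mp hi)]
    simpa using hF00
  have hxhatc : costJT F Tᶜ xhat = costJT F Tᶜ h := by
    apply Finset.sum_congr rfl
    intro i hi
    have h0 : xbar i = 0 := hTsupp i (Finset.mem_compl.mp hi)
    have : h i = - xhat i := by
      show (xbar - xhat) i = - xhat i
      simp [h0]
    rw [this, abs_neg]
  have hTineq : costJT F T xbar ≤ costJT F T xhat + costJT F T h := by
    rw [costJT, costJT, costJT, ← Finset.sum_add_distrib]
    apply Finset.sum_le_sum
    intro i _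
    have : xbar i = xhat i + h i := by
      show xbar i = xhat i + (xbar - xhat) i
      simp
    rw [this]
    exact hFsub _ _
  have hcostkey : costJT F Tᶜ h ≤ costJT F T h := by
    have h1 := hcostsplit xhat
    have h2 := hcostsplit xbar
    linarith [hcost, hxbarc, hxhatc, hTineq, h1.symm ▸ hcost]
  have hdz : d * ‖z‖ ≤ ‖w‖ := by
    by_contra hcon
    push_neg at hcon
    have hz0 : z ≠ 0 := by
      intro h0
      rw [h0, norm_zero, mul_zero] at hcon
      exact absurd hcon (not_lt.mpr (norm_nonneg _))
    have hr := hrnsp z hzK hz0 w hcon T hTcard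
    rw [hzw] at hr
    linarith
  have hhnorm : ‖h‖ ≤ ‖z‖ + ‖w‖ := hzw ▸ norm_add_le z w
  have hpos : (0:ℝ) < d * σ := mul_pos hd hσ
  have hgoal : ‖h‖ ≤ 2 * (1 + d) / (d * σ) * ε := by
    rw [div_mul_eq_mul_div, le_div_iff₀ hpos]
    nlinarith [norm_nonneg z, norm_nonneg w, norm_nonneg h,
      mul_le_mul_of_nonneg_left hdz hσ.le, hε.le]
  exact hgoal
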